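/- Let λ_1, …, λ_q be ℂ-linear functionals on ℂⁿ that are linearly independent over ℤ, and let ω : ℂⁿ → (ℂ∖{0})^q be the standard winding ω(z) = (exp(λ_1(z)), …, exp(λ_q(z))). Then the image ω(ℂⁿ) is Zariski dense in the torus (ℂ∖{0})^q: for every nonzero Laurent polynomial F ∈ ℂ[ℤ^q] in q variables there exists z ∈ ℂⁿ such that F evaluated at ω(z) is nonzero. -/

import Mathlib

set_option autoImplicit false

/-- **Zariski density of the standard winding.**
Let `λ_1, …, λ_q` be ℂ-linear functionals on `ℂⁿ`, linearly independent over `ℤ`, and let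
`ω : ℂⁿ → (ℂ∖{0})^q` be the standard winding `ω(z) = (exp (λ_1 z), …, exp (λ_q z))`.
Then `ω(ℂⁿ)` is Zariski dense in the torus: every nonzero Laurent polynomial
`F ∈ ℂ[ℤ^q]` is nonzero at some point `ω(z)`. -/
theorem standard_winding_zariski_dense
    (n q : ℕ) (lam : Fin q → Module.Dual ℂ (Fin n → ℂ))
    (hindep : ∀ m : Fin q → ℤ, ∑ j, m j • lam j = 0 → m = 0)
    (F : AddMonoidAlgebra ℂ (Fin q → ℤ)) (hF : F ≠ 0) :
    ∃ z : Fin n → ℂ,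
      ∑ m ∈ F.coeff.support, F.coeff m * ∏ j, Complex.exp (lam j z) ^ (m j) ≠ 0 := by
  by_contra h
  push_neg at h
  set μ : (Fin q → ℤ) → ((Fin n → ℂ) →ₗ[ℂ] ℂ) := fun m => ∑ j, m j • lam j with hμ
  have hμinj : Function.Injective μ := by
    intro a b hab
    have h2 : ∑ j, (a - b) j • lam j = 0 := by
      simp only [Pi.sub_apply, sub_smul, Finset.sum_sub_distrib]
      rw [show (∑ j, a j • lam j) = μ a from rfl, show (∑ j, b j • lam j) = μ b from rfl,
        hab, sub_self]
    exact sub_eq_zero.mp (hindep _ h2)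
  let χ : (Fin q → ℤ) → (Multiplicative (Fin n → ℂ) →* ℂ) := fun m =>
    { toFun := fun z => Complex.exp (μ m (Multiplicative.toAdd z))
      map_one' := by simp
      map_mul' := by intro x y; simp [Complex.exp_add] }
  have hχinj : Function.Injective χ := by
    intro a b hab
    apply hμinj
    have key : ∀ z : Fin n → ℂ, Complex.exp (μ a z) = Complex.exp (μ b z) := by
      intro z
      exact congrFun (congrArg DFunLike.coe hab) (Multiplicative.ofAdd z)
    apply LinearMap.ext
    intro z
    by_contra hne
    set c : ℂ := μ a z - μ b z with hc
    have hc0 : c ≠ 0 := sub_ne_zero.mpr hne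
    have k1 : Complex.exp (c⁻¹ * μ a z) = Complex.exp (c⁻¹ * μ b z) := by
      have := key (c⁻¹ • z)
      simpa [map_smul, smul_eq_mul] using this
    have k2 : Complex.exp 1 = 1 := by
      have hd : Complex.exp (c⁻¹ * μ a z - c⁻¹ * μ b z) = 1 := by
        rw [Complex.exp_sub, k1, div_self (Complex.exp_ne_zero _)]
      rwa [← mul_sub, ← hc, inv_mul_cancel₀ hc0] at hd
    obtain ⟨k, hk⟩ := Complex.exp_eq_one_iff.mp k2
    have him := congrArg Complex.im hk
    have hre := congrArg Complex.re hk
    simp [Complex.mul_im, Complex.mul_re] at him hre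
  have key : ∀ (m : Fin q → ℤ) (z : Fin n → ℂ),
      ∏ j, Complex.exp (lam j z) ^ (m j) = Complex.exp (μ m z) := by
    intro m z
    rw [hμ]
    simp only [LinearMap.sum_apply, LinearMap.smul_apply, zsmul_eq_mul]
    rw [Complex.exp_sum]
    exact Finset.prod_congr rfl fun j _ => (Complex.exp_int_mul _ _).symm
  have li : LinearIndependent ℂ
      (fun m : F.coeff.support => ((χ m) : Multiplicative (Fin n → ℂ) → ℂ)) :=
    (linearIndependent_monoidHom (Multiplicative (Fin n → ℂ)) ℂ).comp
      (fun m : F.coeff.support => χ m) (fun a b hab => Subtype.ext (hχinj hab))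
  have hz : ∑ m : F.coeff.support, F.coeff m.1 • ((χ m.1) : Multiplicative (Fin n → ℂ) → ℂ) = 0 := by
    funext z
    have hh := h (Multiplicative.toAdd z)
    simp only [Finset.sum_apply, Pi.smul_apply, smul_eq_mul, Pi.zero_apply]
    rw [← Finset.sum_attach F.coeff.support
      (fun m => F.coeff m * ∏ j, Complex.exp (lam j (Multiplicative.toAdd z)) ^ (m j))] at hh
    rw [← hh]
    refine Finset.sum_congr rfl fun m _ => ?_
    rw [key m.1 (Multiplicative.toAdd z)]
    rfl
  have hall := Fintype.linearIndependent_iff.mp li (fun m => F.coeff m.1) hz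
  obtain ⟨m, hm⟩ := Finsupp.support_nonempty_iff.mpr (mt AddMonoidAlgebra.coeff_eq_zero.mp hF)
  exact (Finsupp.mem_support_iff.mp hm) (hall ⟨m, hm⟩)
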